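/- Let τ be a rational number with τ ≠ 0 and τ ≠ -1, and set c = -(τ^6 + 2τ^5 + 4τ^4 + 8τ^3 + 9τ^2 + 4τ + 1)/(4τ^2(τ+1)^2). Define x1 = (τ^3 + 2τ^2 + τ + 1)/(2τ(τ+1)), x2 = (τ^3 - τ - 1)/(2τ(τ+1)), x3 = -(τ^3 + 2τ^2 + 3τ + 1)/(2τ(τ+1)). Then for f(x) = x^2 + c one has f(x1) = x2, f(x2) = x3, and f(x3) = x1. -/
import Mathlib

theorem rational_three_cycle (τ : ℚ) (h0 : τ ≠ 0) (h1 : τ ≠ -1)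
    (c : ℚ) (hc : c = -(τ^6 + 2*τ^5 + 4*τ^4 + 8*τ^3 + 9*τ^2 + 4*τ + 1) /
      (4*τ^2*(τ + 1)^2))
    (x1 x2 x3 : ℚ)
    (hx1 : x1 = (τ^3 + 2*τ^2 + τ + 1) / (2*τ*(τ + 1)))
    (hx2 : x2 = (τ^3 - τ - 1) / (2*τ*(τ + 1)))
    (hx3 : x3 = -(τ^3 + 2*τ^2 + 3*τ + 1) / (2*τ*(τ + 1)))
    (f : ℚ → ℚ) (hf : ∀ x, f x = x^2 + c) :
    f x1 = x2 ∧ f x2 = x3 ∧ f x3 = x1 := by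
  have h1' : τ + 1 ≠ 0 := by intro h; apply h1; linarith
  subst hc hx1 hx2 hx3
  refine ⟨?_, ?_, ?_⟩ <;> rw [hf] <;> field_simp <;> ring
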